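/- Consider a data market with n buyers and m datasets, where each buyer i ∈ [n] has budget b_i ∈ ℝ≥0 and value v_{i,j} ∈ ℝ≥0 for each dataset j ∈ [m]. For any price vector p ∈ ℝ≥0^m, define the pricing function p̄(x) = Σ_{j=1}^m p_j x_j and valuation v_i(x) = Σ_{j=1}^m v_{i,j} x_j on [0,1]^m. Then the revenue from each buyer i satisfies r(p̄|v_i,b_i) = min(b_i, Σ_{j ∈ [m] : v_{i,j} ≥ p_j} p_j). Moreover, there exists a price vector p̂ ∈ ℝ≥0^m with p̂_j ∈ {v_{i,j} : i ∈ [n]} for every j ∈ [m] such that r(p̄̂|v_i,b_i) ≥ r(p̄|v_i,b_i) for every buyer i ∈ [n], where p̄̂(x) = Σ_j p̂_j x_j. -/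

import Mathlib

noncomputable section

/-- The unit cube `[0,1]^m` in `Fin m → ℝ`. -/
def cube (m : ℕ) : Set (Fin m → ℝ) := Set.Icc 0 1

/-- The affordable set `F(p|b)` (budget in the extended reals, `⊤` = infinite). -/
def afford {E : Type*} (D : Set E) (p : E → ℝ) (b : EReal) : Set E :=
  {x ∈ D | (p x : EReal) ≤ b}

/-- The maximum net utility `u*(p|v,b)`. -/
def uStar {E : Type*} (D : Set E) (p v : E → ℝ) (b : EReal) : ℝ :=
  ⨆ x : afford D p b, (v x.1 - p x.1)

/-- The demand set `Dem(p|v,b)`. -/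
def demand {E : Type*} (D : Set E) (p v : E → ℝ) (b : EReal) : Set E :=
  {x ∈ afford D p b | v x - p x = uStar D p v b}

/-- The revenue `r(p|v,b)`. -/
def revenue {E : Type*} (D : Set E) (p v : E → ℝ) (b : EReal) : ℝ :=
  ⨆ x : demand D p v b, p x.1

lemma rev_lin (m : ℕ) (b : ℝ) (hb : 0 ≤ b) (v p : Fin m → ℝ)
    (hv : ∀ j, 0 ≤ v j) (hp : ∀ j, 0 ≤ p j) :
    revenue (cube m) (fun x => ∑ j, p j * x j) (fun x => ∑ j, v j * x j) (b : EReal)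
      = min b (∑ j ∈ Finset.univ.filter (fun j => p j ≤ v j), p j) := by
  classical
  set P : (Fin m → ℝ) → ℝ := fun x => ∑ j, p j * x j with hPdef
  set V : (Fin m → ℝ) → ℝ := fun x => ∑ j, v j * x j with hVdef
  set A : Finset (Fin m) := Finset.univ.filter (fun j => p j ≤ v j) with hAdef
  set T : ℝ := ∑ j ∈ A, p j with hTdef
  -- membership in afford
  have hmem_aff : ∀ x, x ∈ afford (cube m) P (b : EReal) ↔ x ∈ cube m ∧ P x ≤ b := by
    intro x
    simp [afford, EReal.coe_le_coe_iff]
  -- cube facts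
  have hcube : ∀ x ∈ cube m, ∀ j, 0 ≤ x j ∧ x j ≤ 1 := by
    intro x hx j
    obtain ⟨h0, h1⟩ := hx
    exact ⟨h0 j, h1 j⟩
  have hPc : Continuous P := by
    apply continuous_finset_sum
    intro j _
    exact (continuous_const.mul (continuous_apply j))
  have hVc : Continuous V := by
    apply continuous_finset_sum
    intro j _
    exact (continuous_const.mul (continuous_apply j))
  have hAff_eq : afford (cube m) P (b : EReal) = cube m ∩ P ⁻¹' Set.Iic b := by
    ext x
    simp [hmem_aff x, Set.mem_inter_iff]
  have hAff_cpt : IsCompact (afford (cube m) P (b : EReal)) := by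
    rw [hAff_eq]
    exact (isCompact_Icc).inter_right (isClosed_Iic.preimage hPc)
  have h0aff : (0 : Fin m → ℝ) ∈ afford (cube m) P (b : EReal) := by
    rw [hmem_aff]
    constructor
    · exact Set.mem_Icc.mpr ⟨le_refl _, zero_le_one⟩
    · simp [hPdef, hb]
  obtain ⟨xs, hxs_mem, hxs_max⟩ :=
    hAff_cpt.exists_isMaxOn ⟨0, h0aff⟩ ((hVc.sub hPc).continuousOn)
  haveI : Nonempty ↥(afford (cube m) P (b : EReal)) := ⟨⟨0, h0aff⟩⟩
  have hbdd : BddAbove (Set.range fun x : afford (cube m) P (b : EReal) => V x.1 - P x.1) := by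
    refine ⟨V xs - P xs, ?_⟩
    rintro _ ⟨x, rfl⟩
    exact hxs_max x.2
  have huStar : uStar (cube m) P V (b : EReal) = V xs - P xs := by
    apply le_antisymm
    · exact ciSup_le fun x => hxs_max x.2
    · exact le_ciSup hbdd ⟨xs, hxs_mem⟩
  have hmem_dem : ∀ x, x ∈ demand (cube m) P V (b : EReal) ↔
      x ∈ afford (cube m) P (b : EReal) ∧ V x - P x = uStar (cube m) P V (b : EReal) := by
    intro x; rfl
  have hxs_dem : xs ∈ demand (cube m) P V (b : EReal) := ⟨hxs_mem, huStar.symm⟩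
  have hdem_cpt : IsCompact (demand (cube m) P V (b : EReal)) := by
    have : demand (cube m) P V (b : EReal) =
        afford (cube m) P (b : EReal) ∩ (fun x => V x - P x) ⁻¹' {uStar (cube m) P V (b : EReal)} := by
      ext x; simp [hmem_dem x, Set.mem_inter_iff]
    rw [this]
    exact hAff_cpt.inter_right (isClosed_singleton.preimage (hVc.sub hPc))
  obtain ⟨y, hy_mem, hy_max⟩ := hdem_cpt.exists_isMaxOn ⟨xs, hxs_dem⟩ hPc.continuousOn
  haveI : Nonempty ↥(demand (cube m) P V (b : EReal)) := ⟨⟨xs, hxs_dem⟩⟩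
  have hrev : revenue (cube m) P V (b : EReal) = P y := by
    apply le_antisymm
    · exact ciSup_le fun x => hy_max x.2
    · have hbdd2 : BddAbove (Set.range fun x : demand (cube m) P V (b : EReal) => P x.1) := by
        refine ⟨P y, ?_⟩
        rintro _ ⟨x, rfl⟩
        exact hy_max x.2
      exact le_ciSup hbdd2 ⟨y, hy_mem⟩
  -- utility rewrite
  have hU : ∀ x, V x - P x = ∑ j, (v j - p j) * x j := by
    intro x
    simp [hPdef, hVdef, ← Finset.sum_sub_distrib, sub_mul]
  -- utility upper bound on cube
  have hUbound : ∀ x ∈ cube m, V x - P x ≤ ∑ j ∈ A, (v j - p j) := by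
    intro x hx
    rw [hU, hAdef, Finset.sum_filter]
    apply Finset.sum_le_sum
    intro j _
    by_cases hj : p j ≤ v j
    · simp only [hj, if_true]
      calc (v j - p j) * x j ≤ (v j - p j) * 1 := by
            apply mul_le_mul_of_nonneg_left (hcube x hx j).2 (by linarith)
        _ = v j - p j := mul_one _
    · simp only [hj, if_false]
      have h1 : v j - p j < 0 := by push_neg at hj; linarith
      exact mul_nonpos_of_nonpos_of_nonneg h1.le (hcube x hx j).1
  have hy_aff := hy_mem.1
  have hy_cube : y ∈ cube m := ((hmem_aff y).mp hy_aff).1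
  have hy_b : P y ≤ b := ((hmem_aff y).mp hy_aff).2
  have hTnn : 0 ≤ T := Finset.sum_nonneg fun j _ => hp j
  by_cases hbT : T ≤ b
  · -- indicator point
    set xhat : Fin m → ℝ := fun j => if p j ≤ v j then (1:ℝ) else 0 with hxhat
    have hxhat_cube : xhat ∈ cube m := by
      refine Set.mem_Icc.mpr ⟨?_, ?_⟩ <;> intro j <;> simp only [hxhat, Pi.zero_apply, Pi.one_apply] <;>
        split <;> norm_num
    have hPxhat : P xhat = T := by
      simp only [hPdef, hxhat, hTdef, hAdef, mul_ite, mul_one, mul_zero, Finset.sum_filter]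
    have hUxhat : V xhat - P xhat = ∑ j ∈ A, (v j - p j) := by
      rw [hU]
      simp only [hxhat, hAdef, mul_ite, mul_one, mul_zero, Finset.sum_filter]
    have hxhat_aff : xhat ∈ afford (cube m) P (b : EReal) := by
      rw [hmem_aff]
      exact ⟨hxhat_cube, by rw [hPxhat]; exact hbT⟩
    have huStar_val : uStar (cube m) P V (b : EReal) = ∑ j ∈ A, (v j - p j) := by
      rw [huStar]
      apply le_antisymm (hUbound xs ((hmem_aff xs).mp hxs_mem).1)
      calc (∑ j ∈ A, (v j - p j)) = V xhat - P xhat := hUxhat.symm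
        _ ≤ V xs - P xs := hxs_max hxhat_aff
    have hxhat_dem : xhat ∈ demand (cube m) P V (b : EReal) :=
      ⟨hxhat_aff, by rw [hUxhat, huStar_val]⟩
    -- y has y j = 0 off A
    have hy_eq : ∑ j, (v j - p j) * y j = ∑ j, (if p j ≤ v j then v j - p j else 0) := by
      have h1 : V y - P y = ∑ j ∈ A, (v j - p j) := by
        rw [hy_mem.2, huStar_val]
      rw [hU] at h1
      rw [h1, hAdef, Finset.sum_filter]
    have hy_zero : ∀ j, ¬ p j ≤ v j → y j = 0 := by
      intro j hj
      have hle : ∀ k ∈ Finset.univ, (v k - p k) * y k ≤ (if p k ≤ v k then v k - p k else 0) := by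
        intro k _
        by_cases hk : p k ≤ v k
        · simp only [hk, if_true]
          calc (v k - p k) * y k ≤ (v k - p k) * 1 :=
              mul_le_mul_of_nonneg_left (hcube y hy_cube k).2 (by linarith)
            _ = v k - p k := mul_one _
        · simp only [hk, if_false]
          push_neg at hk
          exact mul_nonpos_of_nonpos_of_nonneg (by linarith) (hcube y hy_cube k).1
      have heach := (Finset.sum_eq_sum_iff_of_le hle).mp hy_eq
      have hj' := heach j (Finset.mem_univ j)
      simp only [hj, if_false] at hj'
      push_neg at hj
      have : v j - p j < 0 := by linarith
      by_contra hyj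
      have hyj' : 0 < y j := lt_of_le_of_ne (hcube y hy_cube j).1 (Ne.symm hyj)
      nlinarith
    have hPyT : P y ≤ T := by
      rw [hPdef, hTdef, hAdef]
      calc (∑ j, p j * y j) ≤ ∑ j, (if p j ≤ v j then p j else 0) := by
            apply Finset.sum_le_sum
            intro j _
            by_cases hj : p j ≤ v j
            · simp only [hj, if_true]
              calc p j * y j ≤ p j * 1 :=
                  mul_le_mul_of_nonneg_left (hcube y hy_cube j).2 (hp j)
                _ = p j := mul_one _
            · simp [hj, hy_zero j hj]
        _ = ∑ j ∈ Finset.univ.filter (fun j => p j ≤ v j), p j := (Finset.sum_filter _ _).symm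
    have hPyT' : T ≤ P y := by
      calc T = P xhat := hPxhat.symm
        _ ≤ P y := hy_max hxhat_dem
    rw [hrev, le_antisymm hPyT hPyT', hTdef, hAdef, min_eq_right hbT]
  · -- budget binds : P y = b
    push_neg at hbT
    have hPyb : P y = b := by
      rcases lt_or_eq_of_le hy_b with hlt | heq
      · exfalso
        have hsumA : ∑ j ∈ A, p j * y j ≤ P y := by
          rw [hPdef]
          apply Finset.sum_le_sum_of_subset_of_nonneg (Finset.subset_univ A)
          intro j _ _
          exact mul_nonneg (hp j) (hcube y hy_cube j).1
        have : ∃ j ∈ A, p j * y j < p j := by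
          by_contra hcon
          push_neg at hcon
          have : T ≤ ∑ j ∈ A, p j * y j := Finset.sum_le_sum hcon
          linarith
        obtain ⟨j, hjA, hj⟩ := this
        have hpj : 0 < p j := by
          rcases (hp j).lt_or_eq with h | h
          · exact h
          · exfalso; rw [← h] at hj; simp at hj
        have hyj1 : y j < 1 := by
          have := hj
          rw [show p j = p j * 1 by ring] at this
          exact lt_of_mul_lt_mul_left (by rw [mul_one] at this ⊢; nlinarith) hpj.le
        set ε : ℝ := min (1 - y j) ((b - P y) / p j) with hεdef
        have hε : 0 < ε := lt_min (by linarith) (div_pos (by linarith) hpj)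
        set z : Fin m → ℝ := Function.update y j (y j + ε) with hzdef
        have hupd : ∀ c : Fin m → ℝ, ∑ k, c k * z k = (∑ k, c k * y k) + c j * ε := by
          intro c
          have h1 : ∑ k, (c k * z k - c k * y k) = c j * ε := by
            rw [Finset.sum_eq_single j]
            · simp [hzdef, Function.update_self]; ring
            · intro k _ hk
              simp [hzdef, Function.update_of_ne hk]
            · simp
          have h2 : ∑ k, (c k * z k - c k * y k) = (∑ k, c k * z k) - ∑ k, c k * y k :=
            Finset.sum_sub_distrib _ _
          linarith [h1, h2.symm.trans h1]
        have hz_cube : z ∈ cube m := by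
          refine Set.mem_Icc.mpr ⟨?_, ?_⟩ <;> intro k <;> by_cases hk : k = j
          · subst hk; simp only [hzdef, Function.update_self, Pi.zero_apply]
            have := (hcube y hy_cube k).1; linarith
          · simp only [hzdef, Function.update_of_ne hk, Pi.zero_apply]
            exact (hcube y hy_cube k).1
          · subst hk; simp only [hzdef, Function.update_self, Pi.one_apply]
            have : ε ≤ 1 - y k := min_le_left _ _
            linarith
          · simp only [hzdef, Function.update_of_ne hk, Pi.one_apply]
            exact (hcube y hy_cube k).2
        have hPz : P z = P y + p j * ε := hupd p
        have hVz : V z = V y + v j * ε := hupd v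
        have hPzb : P z ≤ b := by
          rw [hPz]
          have h1 : ε ≤ (b - P y) / p j := min_le_right _ _
          have h2 : p j * ε ≤ b - P y := by
            rw [mul_comm]
            exact (le_div_iff₀ hpj).mp h1
          linarith
        have hz_aff : z ∈ afford (cube m) P (b : EReal) := (hmem_aff z).mpr ⟨hz_cube, hPzb⟩
        have hvj : p j ≤ v j := (Finset.mem_filter.mp hjA).2
        have hUz_ge : V y - P y ≤ V z - P z := by
          rw [hPz, hVz]
          nlinarith
        have hUz_le : V z - P z ≤ uStar (cube m) P V (b : EReal) := by
          rw [huStar]; exact hxs_max hz_aff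
        have hUz : V z - P z = uStar (cube m) P V (b : EReal) := by
          apply le_antisymm hUz_le
          calc uStar (cube m) P V (b : EReal) = V y - P y := hy_mem.2.symm
            _ ≤ V z - P z := hUz_ge
        have hz_dem : z ∈ demand (cube m) P V (b : EReal) := ⟨hz_aff, hUz⟩
        have : P z ≤ P y := hy_max hz_dem
        rw [hPz] at this
        nlinarith
      · exact heq
    rw [hrev, hPyb, hTdef, hAdef, min_eq_left hbT.le]

/-- In a data market with `n ≥ 1` buyers (budgets `b i ≥ 0`, values
`v i j ≥ 0`) and linear prices `p j ≥ 0`, the revenue from buyer `i` under the linear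
pricing `p̄(x) = ∑ j, p j * x j` equals `min (b i) (∑_{j : v i j ≥ p j} p j)`; moreover
there is a price vector `p̂` with every `p̂ j ∈ {v i j : i}` earning at least as much
revenue from every buyer. -/
theorem stmt14 (n m : ℕ) (hn : 0 < n) (b : Fin n → ℝ) (hb : ∀ i, 0 ≤ b i)
    (v : Fin n → Fin m → ℝ) (hv : ∀ i j, 0 ≤ v i j)
    (p : Fin m → ℝ) (hp : ∀ j, 0 ≤ p j) :
    (∀ i : Fin n,
      revenue (cube m) (fun x => ∑ j, p j * x j) (fun x => ∑ j, v i j * x j) (b i : EReal)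
        = min (b i) (∑ j ∈ Finset.univ.filter (fun j => p j ≤ v i j), p j)) ∧
    ∃ phat : Fin m → ℝ, (∀ j, ∃ i, phat j = v i j) ∧
      ∀ i : Fin n,
        revenue (cube m) (fun x => ∑ j, phat j * x j) (fun x => ∑ j, v i j * x j)
            (b i : EReal) ≥
          revenue (cube m) (fun x => ∑ j, p j * x j) (fun x => ∑ j, v i j * x j)
            (b i : EReal) := by
  classical
  haveI : Nonempty (Fin n) := ⟨⟨0, hn⟩⟩
  have part1 : ∀ i : Fin n,
      revenue (cube m) (fun x => ∑ j, p j * x j) (fun x => ∑ j, v i j * x j) (b i : EReal)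
        = min (b i) (∑ j ∈ Finset.univ.filter (fun j => p j ≤ v i j), p j) :=
    fun i => rev_lin m (b i) (hb i) (v i) p (hv i) hp
  refine ⟨part1, ?_⟩
  -- construct phat
  set S : Fin m → Finset ℝ := fun j => Finset.univ.image (fun i => v i j) with hS
  have hSne : ∀ j, (S j).Nonempty := fun j =>
    (Finset.univ_nonempty).image _
  set G : Fin m → Finset ℝ := fun j => (S j).filter (fun w => p j ≤ w) with hG
  set phat : Fin m → ℝ := fun j =>
    if h : (G j).Nonempty then (G j).min' h else (S j).max' (hSne j) with hphat
  have hmemS : ∀ j, phat j ∈ S j := by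
    intro j
    by_cases h : (G j).Nonempty
    · have heq : phat j = (G j).min' h := by rw [hphat]; simp [h]
      rw [heq]; exact Finset.filter_subset _ _ ((G j).min'_mem h)
    · have heq : phat j = (S j).max' (hSne j) := by rw [hphat]; simp [h]
      rw [heq]; exact (S j).max'_mem (hSne j)
  have hex : ∀ j, ∃ i, phat j = v i j := by
    intro j
    obtain ⟨i, _, hi⟩ := Finset.mem_image.mp (hmemS j)
    exact ⟨i, hi.symm⟩
  have hkey : ∀ i j, p j ≤ v i j → p j ≤ phat j ∧ phat j ≤ v i j := by
    intro i j hij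
    have hvmem : v i j ∈ G j := by
      rw [hG]
      exact Finset.mem_filter.mpr ⟨Finset.mem_image_of_mem _ (Finset.mem_univ i), hij⟩
    have hGne : (G j).Nonempty := ⟨v i j, hvmem⟩
    have hphatj : phat j = (G j).min' hGne := by rw [hphat]; simp [hGne]
    constructor
    · rw [hphatj]
      exact (Finset.mem_filter.mp ((G j).min'_mem hGne)).2
    · rw [hphatj]
      exact (G j).min'_le _ hvmem
  have hphat_nn : ∀ j, 0 ≤ phat j := by
    intro j
    obtain ⟨i, hi⟩ := hex j
    rw [hi]; exact hv i j
  refine ⟨phat, hex, ?_⟩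
  intro i
  rw [part1 i, rev_lin m (b i) (hb i) (v i) phat (hv i) hphat_nn]
  apply min_le_min le_rfl
  have hsub : Finset.univ.filter (fun j => p j ≤ v i j) ⊆
      Finset.univ.filter (fun j => phat j ≤ v i j) := by
    intro j hj
    rw [Finset.mem_filter] at hj ⊢
    exact ⟨hj.1, (hkey i j hj.2).2⟩
  calc (∑ j ∈ Finset.univ.filter (fun j => p j ≤ v i j), p j)
      ≤ ∑ j ∈ Finset.univ.filter (fun j => p j ≤ v i j), phat j := by
        apply Finset.sum_le_sum
        intro j hj
        exact (hkey i j (Finset.mem_filter.mp hj).2).1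
    _ ≤ ∑ j ∈ Finset.univ.filter (fun j => phat j ≤ v i j), phat j :=
        Finset.sum_le_sum_of_subset_of_nonneg hsub (fun j _ _ => hphat_nn j)

end
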